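/- Let X be a finite set and F a family of partial functions from X to {0,1} with weight w(F) = 1 such that every total function f : X → {0,1} extends some member of F. Then for every nonempty S ⊆ X, the weight of F_S^0 equals the weight of F_S^1, where F_S^i = {φ ∈ F : dom(φ) ⊇ S and Σ_{x∈S} φ(x) ≡ i (mod 2)}. -/

import Mathlib

open Finset

/-- The domain of a partial map `φ : X ⇀ Bool` (encoded as `X → Option Bool`). -/
def pdom {X : Type*} [Fintype X] (φ : X → Option Bool) : Finset X :=
  Finset.univ.filter (fun x => (φ x).isSome)

/-- A total function `f : X → Bool` extends the partial map `φ`. -/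
def PExtends {X : Type*} (f : X → Bool) (φ : X → Option Bool) : Prop :=
  ∀ x b, φ x = some b → f x = b

instance {X : Type*} [Fintype X] (f : X → Bool) : DecidablePred (PExtends f) :=
  fun φ => inferInstanceAs (Decidable (∀ x b, φ x = some b → f x = b))

/-- The weight of a family of partial maps: `∑ 2^{-|dom φ|}`. -/
noncomputable def weight {X : Type*} [Fintype X] (F : Finset (X → Option Bool)) : ℝ :=
  ∑ φ ∈ F, (1/2 : ℝ) ^ (pdom φ).card

/-- `F` is a 2-fold cover of the hypergraph `H`. -/
def IsCover {X : Type*} [Fintype X] (H : Finset (Finset X)) (F : Finset (X → Option Bool)) : Prop :=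
  (∀ φ ∈ F, pdom φ ∈ H) ∧
  (∀ φ ∈ F, ∀ ψ ∈ F, φ ≠ ψ → pdom φ = pdom ψ → ∀ x ∈ pdom φ, φ x ≠ ψ x)

section AuxStmt3

variable {X : Type*} [Fintype X] [DecidableEq X]

/-- Indicator (as a real number) that `f` extends `φ`. -/
noncomputable def stmt3ind (φ : X → Option Bool) (f : X → Bool) : ℝ :=
  if PExtends f φ then 1 else 0

/-- The per-coordinate factor. -/
noncomputable def stmt3g (S : Finset X) (φ : X → Option Bool) (x : X) (b : Bool) : ℝ :=
  (if φ x ≠ some (!b) then 1 else 0) * (if x ∈ S then (-1 : ℝ) ^ b.toNat else 1)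

/-- The value of `∑ b, stmt3g S φ x b`. -/
noncomputable def stmt3t (S : Finset X) (φ : X → Option Bool) (x : X) : ℝ :=
  if x ∈ S then (if x ∈ pdom φ then (-1 : ℝ) ^ ((φ x).getD false).toNat else 0)
  else (if x ∈ pdom φ then 1 else 2)

lemma stmt3_sum_prod (g : X → Bool → ℝ) :
    ∑ f : X → Bool, ∏ x, g x (f x) = ∏ x, ∑ b, g x b := by
  rw [Finset.prod_univ_sum, Fintype.piFinset_univ]

lemma stmt3_pextends_iff (f : X → Bool) (φ : X → Option Bool) :
    PExtends f φ ↔ ∀ x, φ x ≠ some (!(f x)) := by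
  constructor
  · intro hp x hx
    have := hp x _ hx
    simp at this
  · intro hp x b hb
    by_contra hne
    apply hp x
    rw [hb]
    cases b <;> cases hfx : f x <;> simp_all

lemma stmt3_ind_sgn (S : Finset X) (φ : X → Option Bool) (f : X → Bool) :
    stmt3ind φ f * (-1 : ℝ) ^ (∑ x ∈ S, (f x).toNat) = ∏ x, stmt3g S φ x (f x) := by
  simp only [stmt3g, Finset.prod_mul_distrib]
  congr 1
  · rw [Finset.prod_boole, stmt3ind]
    congr 1
    simp only [eq_iff_iff]
    rw [stmt3_pextends_iff]
    constructor
    · intro h x _; exact h x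
    · intro h x; exact h x (Finset.mem_univ x)
  · rw [Finset.prod_ite_mem, Finset.univ_inter, Finset.prod_pow_eq_pow_sum]

lemma stmt3_geval (S : Finset X) (φ : X → Option Bool) (x : X) :
    ∑ b : Bool, stmt3g S φ x b = stmt3t S φ x := by
  have hx : x ∈ pdom φ ↔ (φ x).isSome := by simp [pdom]
  rw [Fintype.sum_bool]
  rcases hφ : φ x with _ | c
  · have hx' : x ∉ pdom φ := by simp [hx, hφ]
    by_cases hs : x ∈ S <;>
      simp [stmt3g, stmt3t, hφ, hs, hx'] <;> norm_num
  · have hx' : x ∈ pdom φ := by simp [hx, hφ]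
    by_cases hs : x ∈ S <;> cases c <;>
      simp [stmt3g, stmt3t, hφ, hs, hx']

lemma stmt3_key (S : Finset X) (φ : X → Option Bool) :
    ∑ f : X → Bool, stmt3ind φ f * (-1 : ℝ) ^ (∑ x ∈ S, (f x).toNat) =
    if S ⊆ pdom φ then
      (-1 : ℝ) ^ (∑ x ∈ S, ((φ x).getD false).toNat)
        * 2 ^ (Fintype.card X - (pdom φ).card)
    else 0 := by
  simp_rw [stmt3_ind_sgn, stmt3_sum_prod, stmt3_geval]
  by_cases hsub : S ⊆ pdom φ
  · rw [if_pos hsub]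
    rw [← Finset.prod_filter_mul_prod_filter_not Finset.univ (· ∈ S)]
    have hSfil : Finset.univ.filter (· ∈ S) = S := by ext x; simp
    have h1 : ∏ x ∈ Finset.univ.filter (· ∈ S), stmt3t S φ x =
        (-1 : ℝ) ^ (∑ x ∈ S, ((φ x).getD false).toNat) := by
      rw [hSfil, ← Finset.prod_pow_eq_pow_sum]
      refine Finset.prod_congr rfl fun x hx => ?_
      simp [stmt3t, hx, hsub hx]
    have h2 : ∏ x ∈ Finset.univ.filter (fun x => ¬ x ∈ S), stmt3t S φ x =
        2 ^ (Fintype.card X - (pdom φ).card) := by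
      have hcongr : ∀ x ∈ Finset.univ.filter (fun x => ¬ x ∈ S),
          stmt3t S φ x = if x ∈ pdom φ then 1 else 2 := by
        intro x hx
        simp only [Finset.mem_filter] at hx
        simp [stmt3t, hx.2]
      rw [Finset.prod_congr rfl hcongr, Finset.prod_ite, Finset.prod_const_one,
        Finset.prod_const, one_mul]
      congr 1
      have : (Finset.univ.filter (fun x => ¬ x ∈ S)).filter (fun x => ¬ x ∈ pdom φ)
          = (pdom φ)ᶜ := by
        ext x
        simp only [Finset.mem_filter, Finset.mem_compl, Finset.mem_univ, true_and]
        constructor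
        · exact fun h => h.2
        · intro h; exact ⟨fun hxS => h (hsub hxS), h⟩
      rw [this, Finset.card_compl]
    rw [h1, h2]
  · rw [if_neg hsub]
    obtain ⟨x0, hx0S, hx0d⟩ := Finset.not_subset.mp hsub
    refine Finset.prod_eq_zero (Finset.mem_univ x0) ?_
    simp [stmt3t, hx0S, hx0d]

lemma stmt3_count (φ : X → Option Bool) :
    ∑ f : X → Bool, stmt3ind φ f = 2 ^ (Fintype.card X - (pdom φ).card) := by
  have := stmt3_key (∅ : Finset X) φ
  simpa using this

lemma stmt3_pow {n d : ℕ} (hd : d ≤ n) : (2 : ℝ) ^ (n - d) = 2 ^ n * (1/2) ^ d := by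
  have h : (2 : ℝ) ^ n = 2 ^ (n - d) * 2 ^ d := by
    rw [← pow_add, Nat.sub_add_cancel hd]
  rw [h]
  field_simp
  rw [← mul_pow]
  norm_num

end AuxStmt3

theorem stmt_3 {X : Type*} [Fintype X] [DecidableEq X]
    (F : Finset (X → Option Bool))
    (h : ∀ f : X → Bool, ∃ φ ∈ F, PExtends f φ)
    (hw : weight F = 1)
    (S : Finset X) (hS : S.Nonempty) :
    weight (F.filter (fun φ => S ⊆ pdom φ ∧ (∑ x ∈ S, ((φ x).getD false).toNat) % 2 = 0)) =
    weight (F.filter (fun φ => S ⊆ pdom φ ∧ (∑ x ∈ S, ((φ x).getD false).toNat) % 2 = 1)) := by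
  set n := Fintype.card X with hn
  have hdle : ∀ φ : X → Option Bool, (pdom φ).card ≤ n := fun φ => Finset.card_le_univ _
  -- the total weight identity : ∑_φ 2^(n-dφ) = 2^n
  have htot : ∑ φ ∈ F, (2 : ℝ) ^ (n - (pdom φ).card) = 2 ^ n := by
    calc ∑ φ ∈ F, (2 : ℝ) ^ (n - (pdom φ).card)
        = ∑ φ ∈ F, (2 : ℝ) ^ n * (1/2) ^ (pdom φ).card :=
          Finset.sum_congr rfl fun φ _ => stmt3_pow (hdle φ)
      _ = 2 ^ n * weight F := by rw [weight, Finset.mul_sum]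
      _ = 2 ^ n := by rw [hw, mul_one]
  -- every f extends exactly one member of F (in the indicator sense)
  have hone : ∀ f : X → Bool, ∑ φ ∈ F, stmt3ind φ f = 1 := by
    have hswap : ∑ f : X → Bool, ∑ φ ∈ F, stmt3ind φ f = 2 ^ n := by
      rw [Finset.sum_comm]
      rw [Finset.sum_congr rfl fun φ _ => stmt3_count φ]
      exact htot
    have hge : ∀ f : X → Bool, (1 : ℝ) ≤ ∑ φ ∈ F, stmt3ind φ f := by
      intro f
      obtain ⟨φ, hφF, hφ⟩ := h f
      have h1 : stmt3ind φ f = 1 := by simp [stmt3ind, hφ]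
      calc (1 : ℝ) = stmt3ind φ f := h1.symm
        _ ≤ ∑ ψ ∈ F, stmt3ind ψ f :=
          Finset.single_le_sum (f := fun ψ => stmt3ind ψ f) (fun ψ _ => by simp only [stmt3ind]; positivity) hφF
    have hzero : ∑ f : X → Bool, ((∑ φ ∈ F, stmt3ind φ f) - 1) = 0 := by
      rw [Finset.sum_sub_distrib, hswap, Finset.sum_const, Finset.card_univ, nsmul_eq_mul,
        mul_one, Fintype.card_fun, Fintype.card_bool]
      push_cast
      ring
    intro f
    have := (Finset.sum_eq_zero_iff_of_nonneg
      (fun g _ => by linarith [hge g])).mp hzero f (Finset.mem_univ f)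
    linarith
  -- the character sum over all f vanishes
  have hchar : ∑ f : X → Bool, (-1 : ℝ) ^ (∑ x ∈ S, (f x).toNat) = 0 := by
    have hk := stmt3_key S (fun _ : X => none)
    have hpd : pdom (fun _ : X => none) = (∅ : Finset X) := by simp [pdom]
    have hind : ∀ f : X → Bool, stmt3ind (fun _ : X => none) f = 1 := by
      intro f; simp [stmt3ind, PExtends]
    have hns : ¬ S ⊆ pdom (fun _ : X => none) := by
      rw [hpd, Finset.subset_empty]
      exact hS.ne_empty
    rw [if_neg hns] at hk
    calc ∑ f : X → Bool, (-1 : ℝ) ^ (∑ x ∈ S, (f x).toNat)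
        = ∑ f : X → Bool,
            stmt3ind (fun _ : X => none) f * (-1 : ℝ) ^ (∑ x ∈ S, (f x).toNat) := by
          refine Finset.sum_congr rfl fun f _ => ?_
          rw [hind f, one_mul]
      _ = 0 := hk
  -- decompose the character sum over F
  have hmain : ∑ φ ∈ F, (if S ⊆ pdom φ then
      (-1 : ℝ) ^ (∑ x ∈ S, ((φ x).getD false).toNat) * 2 ^ (n - (pdom φ).card)
      else 0) = 0 := by
    calc ∑ φ ∈ F, (if S ⊆ pdom φ then
          (-1 : ℝ) ^ (∑ x ∈ S, ((φ x).getD false).toNat) * 2 ^ (n - (pdom φ).card)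
          else 0)
        = ∑ φ ∈ F, ∑ f : X → Bool,
            stmt3ind φ f * (-1 : ℝ) ^ (∑ x ∈ S, (f x).toNat) :=
          (Finset.sum_congr rfl fun φ _ => (stmt3_key S φ)).symm
      _ = ∑ f : X → Bool, ∑ φ ∈ F,
            stmt3ind φ f * (-1 : ℝ) ^ (∑ x ∈ S, (f x).toNat) := Finset.sum_comm
      _ = ∑ f : X → Bool, (-1 : ℝ) ^ (∑ x ∈ S, (f x).toNat) := by
          refine Finset.sum_congr rfl fun f _ => ?_
          rw [← Finset.sum_mul, hone f, one_mul]
      _ = 0 := hchar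
  -- rewrite the decomposition as a difference of the two filtered weights
  have hsplit : ∀ φ : X → Option Bool,
      (if S ⊆ pdom φ then
        (-1 : ℝ) ^ (∑ x ∈ S, ((φ x).getD false).toNat) * 2 ^ (n - (pdom φ).card)
        else 0) =
      (if S ⊆ pdom φ ∧ (∑ x ∈ S, ((φ x).getD false).toNat) % 2 = 0 then
          (2 : ℝ) ^ (n - (pdom φ).card) else 0) -
      (if S ⊆ pdom φ ∧ (∑ x ∈ S, ((φ x).getD false).toNat) % 2 = 1 then
          (2 : ℝ) ^ (n - (pdom φ).card) else 0) := by
    intro φ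
    by_cases hsub : S ⊆ pdom φ
    · rcases Nat.even_or_odd (∑ x ∈ S, ((φ x).getD false).toNat) with he | ho
      · rw [if_pos hsub, if_pos ⟨hsub, Nat.even_iff.mp he⟩,
          if_neg (by simp [Nat.even_iff.mp he]), he.neg_one_pow, one_mul, sub_zero]
      · rw [if_pos hsub, if_neg (by simp [Nat.odd_iff.mp ho]),
          if_pos ⟨hsub, Nat.odd_iff.mp ho⟩, ho.neg_one_pow, zero_sub, neg_one_mul]
    · rw [if_neg hsub, if_neg (fun hc => hsub hc.1), if_neg (fun hc => hsub hc.1), sub_zero]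
  rw [Finset.sum_congr rfl (fun φ _ => hsplit φ), Finset.sum_sub_distrib] at hmain
  have hfw : ∀ p : (X → Option Bool) → Prop, ∀ _ : DecidablePred p,
      ∑ φ ∈ F, (if p φ then (2 : ℝ) ^ (n - (pdom φ).card) else 0)
        = 2 ^ n * weight (F.filter p) := by
    intro p _
    rw [← Finset.sum_filter, weight, Finset.mul_sum]
    refine Finset.sum_congr rfl fun φ hφ => ?_
    exact stmt3_pow (hdle φ)
  rw [hfw _ _, hfw _ _] at hmain
  have h2n : (2 : ℝ) ^ n ≠ 0 := by positivity
  have := sub_eq_zero.mp hmain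
  exact mul_left_cancel₀ h2n this
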